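/- For every t = 1,…,T, the cost-to-go function 𝒬_{t+1} is Lipschitz continuous on 𝒳_t, i.e., there exists L ≥ 0 such that |𝒬_{t+1}(y) − 𝒬_{t+1}(y′)| ≤ L‖y − y′‖ for all y, y′ ∈ 𝒳_t. -/

import Mathlib

open Matrix Set

noncomputable section

/-- Convexity of an extended-real-valued function, via convexity of its epigraph. -/
def ERealConvex {E : Type*} [AddCommGroup E] [Module ℝ E] (φ : E → EReal) : Prop :=
  Convex ℝ {pz : E × ℝ | φ pz.1 ≤ (pz.2 : EReal)}

/-- A proper extended-real-valued function: never −∞ and not identically +∞. -/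
def ERealProper {E : Type*} (φ : E → EReal) : Prop :=
  (∀ x, φ x ≠ ⊥) ∧ (∃ x, φ x ≠ ⊤)

/-- A lower semicontinuous `EReal`-valued function which is never `⊥` is bounded below by a real
constant on any compact set. -/
lemma lsc_bddBelow_aux {E : Type*} [TopologicalSpace E] {φ : E → EReal}
    (hφ : LowerSemicontinuous φ) (hb : ∀ x, φ x ≠ ⊥) {K : Set E} (hK : IsCompact K) :
    ∃ c : ℝ, ∀ x ∈ K, (c : EReal) ≤ φ x := by
  have hcover : K ⊆ ⋃ m : ℕ, {x | ((-(m : ℝ) : ℝ) : EReal) < φ x} := by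
    intro x _
    simp only [mem_iUnion, mem_setOf_eq]
    rcases eq_or_ne (φ x) ⊤ with h | h
    · refine ⟨0, ?_⟩
      rw [h]
      exact lt_of_le_of_ne le_top (by simp)
    · lift φ x to ℝ using ⟨h, hb x⟩ with r hr
      obtain ⟨m, hm⟩ := exists_nat_gt (-r)
      refine ⟨m, ?_⟩
      have : -(m : ℝ) < r := by linarith
      exact_mod_cast this
  obtain ⟨s, hs⟩ := hK.elim_finite_subcover _
    (fun m : ℕ => hφ.isOpen_preimage (((-(m : ℝ) : ℝ) : EReal))) hcover
  rcases s.eq_empty_or_nonempty with rfl | hsne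
  · exact ⟨0, fun x hx => by simpa using hs hx⟩
  · obtain ⟨N, hN⟩ := s.exists_le
    refine ⟨-(N : ℝ), fun x hx => ?_⟩
    obtain ⟨m, hm, hxm⟩ := mem_iUnion₂.mp (hs hx)
    have : ((-(N : ℝ) : ℝ) : EReal) ≤ ((-(m : ℝ) : ℝ) : EReal) := by
      exact_mod_cast neg_le_neg (by exact_mod_cast hN m hm)
    exact le_of_lt (lt_of_le_of_lt this hxm)

/-- A convex function, uniformly bounded on a convex set `U`, is Lipschitz on any set `K` that is
at uniform positive distance from the complement of `U`. -/
lemma convex_lipschitz_aux {E : Type*} [NormedAddCommGroup E] [NormedSpace ℝ E]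
    {U K : Set E} {r : E → ℝ} {M ε : ℝ}
    (hr : ConvexOn ℝ U r) (hM : ∀ y ∈ U, |r y| ≤ M) (hε : 0 < ε)
    (hKU : ∀ y ∈ K, Metric.ball y ε ⊆ U) :
    ∀ y ∈ K, ∀ y' ∈ K, |r y - r y'| ≤ (4 * M / ε) * ‖y - y'‖ := by
  have oneside : ∀ y ∈ K, ∀ y' ∈ K, r y' - r y ≤ (4 * M / ε) * ‖y - y'‖ := by
    intro y hy y' hy'
    have hyU : y ∈ U := hKU y hy (Metric.mem_ball_self hε)
    have hy'U : y' ∈ U := hKU y' hy' (Metric.mem_ball_self hε)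
    have hM0 : 0 ≤ M := le_trans (abs_nonneg _) (hM y hyU)
    rcases eq_or_ne y y' with rfl | hne
    · simp
    · set d : ℝ := ‖y' - y‖ with hd
      have hd0 : 0 < d := by
        rw [hd, norm_pos_iff, sub_ne_zero]; exact (Ne.symm hne)
      set c : ℝ := ε / 2 with hc
      have hc0 : 0 < c := by positivity
      set z : E := y' + (c / d) • (y' - y) with hz
      have hzU : z ∈ U := by
        apply hKU y' hy'
        have hdist : dist z y' = c := by
          rw [hz, dist_eq_norm, add_sub_cancel_left, norm_smul, Real.norm_eq_abs,
            abs_of_pos (div_pos hc0 hd0), ← hd, div_mul_cancel₀ _ (ne_of_gt hd0)]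
        rw [Metric.mem_ball, hdist, hc]; linarith
      set lam : ℝ := d / (d + c) with hlam
      have hdc : (0:ℝ) < d + c := by positivity
      have hlam0 : 0 ≤ lam := by positivity
      have hlam1 : lam ≤ 1 := by
        rw [hlam, div_le_one hdc]; linarith
      have hcomb : y' = (1 - lam) • y + lam • z := by
        rw [hz, hlam, smul_add, smul_smul]
        match_scalars
        · field_simp
        · field_simp; ring
      have hineq := hr.2 hyU hzU (by linarith : (0:ℝ) ≤ 1 - lam) hlam0 (by ring)
      rw [← hcomb] at hineq
      simp only [smul_eq_mul] at hineq
      have hrz : r z - r y ≤ 2 * M := by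
        have h1 := (abs_le.mp (hM z hzU)).2
        have h2 := (abs_le.mp (hM y hyU)).1
        linarith
      have hlamd : lam ≤ d / c := by
        rw [hlam, div_le_div_iff₀ hdc hc0]
        nlinarith
      have key : r y' - r y ≤ lam * (r z - r y) := by nlinarith
      have final : lam * (r z - r y) ≤ (d / c) * (2 * M) := by
        rcases le_or_gt 0 (r z - r y) with h | h
        · exact mul_le_mul hlamd hrz h (by positivity)
        · calc lam * (r z - r y) ≤ 0 := mul_nonpos_of_nonneg_of_nonpos hlam0 h.le
            _ ≤ (d / c) * (2 * M) := by positivity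
      have heq : (d / c) * (2 * M) = (4 * M / ε) * ‖y - y'‖ := by
        rw [hc, hd, norm_sub_rev]
        field_simp
        ring
      linarith
  intro y hy y' hy'
  rw [abs_sub_le_iff]
  constructor
  · have := oneside y' hy' y hy
    rw [norm_sub_rev] at this
    linarith
  · exact oneside y hy y' hy'

lemma mulVec_comb_aux {n q : ℕ} (M : Matrix (Fin q) (Fin n) ℝ) (a b : ℝ)
    (x x' : EuclideanSpace ℝ (Fin n)) :
    M.mulVec (a • x + b • x') = a • M.mulVec x + b • M.mulVec x' := by
  rw [Matrix.mulVec_add, Matrix.mulVec_smul, Matrix.mulVec_smul]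

/-- under (H1), each cost-to-go function `𝒬_{t+1}` is (finite and) Lipschitz
continuous on `𝒳_t`. -/
theorem stmt_1
    (n p q T : ℕ) (hn : 1 ≤ n) (hp : 1 ≤ p) (hq : 1 ≤ q) (hT : 1 ≤ T)
    (x₀ : EuclideanSpace ℝ (Fin n))
    (𝒳 : ℕ → Set (EuclideanSpace ℝ (Fin n)))
    (h𝒳₀ : 𝒳 0 = {x₀})
    (h𝒳 : ∀ t, 1 ≤ t → t ≤ T → (𝒳 t).Nonempty ∧ Convex ℝ (𝒳 t) ∧ IsCompact (𝒳 t))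
    (f : ℕ → EuclideanSpace ℝ (Fin n) → EuclideanSpace ℝ (Fin n) → EReal)
    (hf : ∀ t, 1 ≤ t → t ≤ T →
      ERealProper (fun z : EuclideanSpace ℝ (Fin n) × EuclideanSpace ℝ (Fin n) => f t z.1 z.2) ∧
      LowerSemicontinuous
        (fun z : EuclideanSpace ℝ (Fin n) × EuclideanSpace ℝ (Fin n) => f t z.1 z.2) ∧
      ERealConvex
        (fun z : EuclideanSpace ℝ (Fin n) × EuclideanSpace ℝ (Fin n) => f t z.1 z.2) ∧
      (𝒳 t ×ˢ 𝒳 (t - 1)) ⊆ interior {z : EuclideanSpace ℝ (Fin n) × EuclideanSpace ℝ (Fin n) |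
        f t z.1 z.2 ≠ ⊤})
    (g : ℕ → Fin p → EuclideanSpace ℝ (Fin n) → EuclideanSpace ℝ (Fin n) → EReal)
    (hg : ∀ t, 1 ≤ t → t ≤ T → ∀ i,
      ERealProper (fun z : EuclideanSpace ℝ (Fin n) × EuclideanSpace ℝ (Fin n) => g t i z.1 z.2) ∧
      LowerSemicontinuous
        (fun z : EuclideanSpace ℝ (Fin n) × EuclideanSpace ℝ (Fin n) => g t i z.1 z.2) ∧
      ERealConvex
        (fun z : EuclideanSpace ℝ (Fin n) × EuclideanSpace ℝ (Fin n) => g t i z.1 z.2) ∧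
      (𝒳 t ×ˢ 𝒳 (t - 1)) ⊆ interior {z : EuclideanSpace ℝ (Fin n) × EuclideanSpace ℝ (Fin n) |
        g t i z.1 z.2 ≠ ⊤})
    (A B : ℕ → Matrix (Fin q) (Fin n) ℝ) (b : ℕ → Fin q → ℝ)
    (X : ℕ → EuclideanSpace ℝ (Fin n) → Set (EuclideanSpace ℝ (Fin n)))
    (hX : ∀ t y, X t y =
      {x ∈ 𝒳 t | (∀ i, g t i x y ≤ 0) ∧ (A t).mulVec x + (B t).mulVec y = b t})
    -- Assumption (H1)
    (hH1a : (X 1 x₀).Nonempty)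
    (hH1b : ∀ t, 2 ≤ t → t ≤ T →
      𝒳 (t - 1) ⊆ interior {y | (X t y ∩ intrinsicInterior ℝ (𝒳 t)).Nonempty})
    -- the cost-to-go functions
    (Q : ℕ → EuclideanSpace ℝ (Fin n) → EReal)
    (hQT : ∀ y, Q (T + 1) y = 0)
    (hQ : ∀ t, 1 ≤ t → t ≤ T → ∀ y,
      Q t y = sInf ((fun x => f t x y + Q (t + 1) x) '' X t y)) :
    ∀ t, 1 ≤ t → t ≤ T →
      (∀ y ∈ 𝒳 t, Q (t + 1) y ≠ ⊥ ∧ Q (t + 1) y ≠ ⊤) ∧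
      ∃ L : ℝ, 0 ≤ L ∧ ∀ y ∈ 𝒳 t, ∀ y' ∈ 𝒳 t,
        |(Q (t + 1) y).toReal - (Q (t + 1) y').toReal| ≤ L * ‖y - y'‖ := by
  suffices H : ∀ d t, 1 ≤ t → t ≤ T → T - t ≤ d →
      (∀ y ∈ 𝒳 t, Q (t + 1) y ≠ ⊥ ∧ Q (t + 1) y ≠ ⊤) ∧
      ConvexOn ℝ (𝒳 t) (fun y => (Q (t + 1) y).toReal) ∧
      ∃ L : ℝ, 0 ≤ L ∧ ∀ y ∈ 𝒳 t, ∀ y' ∈ 𝒳 t,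
        |(Q (t + 1) y).toReal - (Q (t + 1) y').toReal| ≤ L * ‖y - y'‖ by
    intro t ht1 htT
    exact ⟨(H (T - t) t ht1 htT le_rfl).1, (H (T - t) t ht1 htT le_rfl).2.2⟩
  intro d
  induction d with
  | zero =>
    intro t ht1 htT hd
    have htT' : t = T := by omega
    subst htT'
    obtain ⟨h𝒳ne, h𝒳cv, h𝒳cp⟩ := h𝒳 t ht1 htT
    refine ⟨fun y _ => by rw [hQT y]; exact ⟨by simp, by simp⟩, ?_, 0, le_rfl, ?_⟩
    · have heq : (fun y => (Q (t + 1) y).toReal) = fun _ => (0 : ℝ) := by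
        funext y; rw [hQT y]; simp
      rw [heq]
      exact convexOn_const 0 h𝒳cv
    · intro y _ y' _
      rw [hQT y, hQT y']
      simp
  | succ d ih =>
    intro t ht1 htT hd
    rcases le_or_gt (T - t) d with hle | hgt
    · exact ih t ht1 htT hle
    have hsT : t + 1 ≤ T := by omega
    obtain ⟨hfin, hconv, L', hL'0, hL'⟩ := ih (t + 1) (by omega) hsT (by omega)
    obtain ⟨h𝒳tne, h𝒳tconv, h𝒳tcpt⟩ := h𝒳 t ht1 (by omega)
    obtain ⟨h𝒳sne, h𝒳sconv, h𝒳scpt⟩ := h𝒳 (t + 1) (by omega) hsT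
    obtain ⟨⟨hfbot, -⟩, hflsc, hfcvx, hfdom⟩ := hf (t + 1) (by omega) hsT
    simp only [Nat.add_sub_cancel] at hfdom
    have hgprop := hg (t + 1) (by omega) hsT
    -- the value function at time t+2, as a real function
    set qr : EuclideanSpace ℝ (Fin n) → ℝ := fun x => (Q (t + 1 + 1) x).toReal with hqr
    have hQcoe : ∀ x ∈ 𝒳 (t + 1), ((qr x : ℝ) : EReal) = Q (t + 1 + 1) x := fun x hx =>
      EReal.coe_toReal (hfin x hx).2 (hfin x hx).1
    -- a uniform bound for qr on 𝒳 (t+1)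
    obtain ⟨x₁, hx₁⟩ := h𝒳sne
    obtain ⟨C, hC⟩ := isBounded_iff_forall_norm_le.mp h𝒳scpt.isBounded
    set Mq : ℝ := |qr x₁| + L' * (2 * C) with hMq
    have hqrbd : ∀ x ∈ 𝒳 (t + 1), |qr x| ≤ Mq := by
      intro x hx
      have h1 := hL' x hx x₁ hx₁
      have h2 : ‖x - x₁‖ ≤ 2 * C := by
        calc ‖x - x₁‖ ≤ ‖x‖ + ‖x₁‖ := norm_sub_le _ _
          _ ≤ 2 * C := by have := hC x hx; have := hC x₁ hx₁; linarith
      have h3 : |qr x - qr x₁| ≤ L' * (2 * C) :=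
        le_trans h1 (by nlinarith)
      have h4 : |qr x| ≤ |qr x - qr x₁| + |qr x₁| := by
        have := abs_add_le (qr x - qr x₁) (qr x₁)
        simpa using this
      rw [hMq]; linarith
    -- choice of the thickening radius δ
    have hW : 𝒳 t ⊆ interior {y | (X (t + 1) y ∩ intrinsicInterior ℝ (𝒳 (t + 1))).Nonempty} := by
      have := hH1b (t + 1) (by omega) hsT
      simpa using this
    obtain ⟨δ₁, hδ₁pos, hδ₁⟩ := h𝒳tcpt.exists_thickening_subset_open isOpen_interior hW
    obtain ⟨δ₂, hδ₂pos, hδ₂⟩ :=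
      (h𝒳scpt.prod h𝒳tcpt).exists_thickening_subset_open isOpen_interior hfdom
    set δ : ℝ := min δ₁ δ₂ with hδ
    have hδpos : 0 < δ := lt_min hδ₁pos hδ₂pos
    set U : Set (EuclideanSpace ℝ (Fin n)) := Metric.thickening δ (𝒳 t) with hUdef
    have hUopen : IsOpen U := Metric.isOpen_thickening
    have hUconv : Convex ℝ U := h𝒳tconv.thickening δ
    have h𝒳tU : 𝒳 t ⊆ U := Metric.self_subset_thickening hδpos _
    have hUW : U ⊆ {y | (X (t + 1) y ∩ intrinsicInterior ℝ (𝒳 (t + 1))).Nonempty} :=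
      ((Metric.thickening_mono (min_le_left _ _) _).trans hδ₁).trans interior_subset
    have hfneU : ∀ x ∈ 𝒳 (t + 1), ∀ y ∈ U, f (t + 1) x y ≠ ⊤ := by
      intro x hx y hy
      have hyU : y ∈ Metric.thickening δ₂ (𝒳 t) :=
        Metric.thickening_mono (min_le_right _ _) _ hy
      obtain ⟨y₀, hy₀, hdy⟩ := Metric.mem_thickening_iff.mp hyU
      have hmem : (x, y) ∈ Metric.thickening δ₂ (𝒳 (t + 1) ×ˢ 𝒳 t) := by
        rw [Metric.mem_thickening_iff]
        refine ⟨(x, y₀), ⟨hx, hy₀⟩, ?_⟩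
        rw [Prod.dist_eq]
        simp only [dist_self]
        exact max_lt hδ₂pos hdy
      exact interior_subset (hδ₂ hmem)
    -- lower bound for Q (t+1) on the closed thickening
    obtain ⟨c₁, hc₁⟩ := lsc_bddBelow_aux hflsc hfbot (h𝒳scpt.prod h𝒳tcpt.cthickening)
    have hlb : ∀ y ∈ Metric.cthickening δ (𝒳 t), ((c₁ - Mq : ℝ) : EReal) ≤ Q (t + 1) y := by
      intro y hy
      rw [hQ (t + 1) (by omega) hsT y]
      apply le_sInf
      rintro a ⟨x, hxX, rfl⟩
      rw [hX] at hxX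
      simp only [Set.mem_setOf_eq] at hxX
      obtain ⟨hx𝒳, -, -⟩ := hxX
      have h1 : (c₁ : EReal) ≤ f (t + 1) x y := hc₁ (x, y) ⟨hx𝒳, hy⟩
      have h2 : ((-Mq : ℝ) : EReal) ≤ Q (t + 1 + 1) x := by
        rw [← hQcoe x hx𝒳]
        exact_mod_cast (abs_le.mp (hqrbd x hx𝒳)).1
      calc ((c₁ - Mq : ℝ) : EReal) = (c₁ : EReal) + ((-Mq : ℝ) : EReal) := by
            rw [← EReal.coe_add, sub_eq_add_neg]
        _ ≤ _ := add_le_add h1 h2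
    -- upper bound (finiteness) for Q (t+1) on U
    have hub : ∀ y ∈ U, Q (t + 1) y ≠ ⊤ := by
      intro y hy
      obtain ⟨x, hxX, -⟩ := hUW hy
      have hx𝒳 : x ∈ 𝒳 (t + 1) := by
        rw [hX] at hxX
        exact hxX.1
      have h1 : Q (t + 1) y ≤ f (t + 1) x y + Q (t + 1 + 1) x := by
        rw [hQ (t + 1) (by omega) hsT y]
        exact sInf_le ⟨x, hxX, rfl⟩
      intro htop
      rw [htop] at h1
      have h2 : f (t + 1) x y + Q (t + 1 + 1) x < ⊤ := by
        rw [← hQcoe x hx𝒳]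
        exact EReal.add_lt_top (hfneU x hx𝒳 y hy) (EReal.coe_ne_top _)
      exact absurd h1 (not_le.mpr h2)
    have hfinU : ∀ y ∈ U, Q (t + 1) y ≠ ⊥ ∧ Q (t + 1) y ≠ ⊤ := by
      intro y hy
      refine ⟨?_, hub y hy⟩
      have hl := hlb y (Metric.thickening_subset_cthickening δ _ hy)
      intro hbotQ
      rw [hbotQ] at hl
      exact (EReal.coe_ne_bot _) (le_bot_iff.mp hl)
    set R : EuclideanSpace ℝ (Fin n) → ℝ := fun y => (Q (t + 1) y).toReal with hRdef
    have hRcoe : ∀ y ∈ U, ((R y : ℝ) : EReal) = Q (t + 1) y := fun y hy =>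
      EReal.coe_toReal (hfinU y hy).2 (hfinU y hy).1
    -- near-optimal solutions
    have hnearinf : ∀ y ∈ U, ∀ ε : ℝ, 0 < ε → ∃ x, x ∈ X (t + 1) y ∧ x ∈ 𝒳 (t + 1) ∧
        f (t + 1) x y ≠ ⊤ ∧ f (t + 1) x y ≠ ⊥ ∧
        (f (t + 1) x y).toReal + qr x < R y + ε := by
      intro y hy ε hε
      have hQy : Q (t + 1) y = sInf ((fun x => f (t + 1) x y + Q (t + 1 + 1) x) '' X (t + 1) y) :=
        hQ (t + 1) (by omega) hsT y
      have hlt : sInf ((fun x => f (t + 1) x y + Q (t + 1 + 1) x) '' X (t + 1) y)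
          < ((R y + ε : ℝ) : EReal) := by
        rw [← hQy, ← hRcoe y hy]
        exact_mod_cast (lt_add_of_pos_right (R y) hε)
      obtain ⟨a, ⟨x, hxX, rfl⟩, ha⟩ := sInf_lt_iff.mp hlt
      replace ha : f (t + 1) x y + Q (t + 1 + 1) x < ((R y + ε : ℝ) : EReal) := ha
      have hx𝒳 : x ∈ 𝒳 (t + 1) := by
        rw [hX] at hxX
        exact hxX.1
      have hQx : Q (t + 1 + 1) x = ((qr x : ℝ) : EReal) := (hQcoe x hx𝒳).symm
      have hfb : f (t + 1) x y ≠ ⊥ := hfbot (x, y)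
      have hft : f (t + 1) x y ≠ ⊤ := by
        intro h
        rw [h, hQx, EReal.top_add_of_ne_bot (EReal.coe_ne_bot _)] at ha
        exact (not_top_lt) ha
      refine ⟨x, hxX, hx𝒳, hft, hfb, ?_⟩
      rw [hQx, ← EReal.coe_toReal hft hfb, ← EReal.coe_add] at ha
      exact_mod_cast ha
    -- convexity of R on U
    have hRconv : ConvexOn ℝ U R := by
      refine ⟨hUconv, ?_⟩
      intro y hy y' hy' a b' ha hb hab
      have hy'' : a • y + b' • y' ∈ U := hUconv hy hy' ha hb hab
      rw [smul_eq_mul, smul_eq_mul]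
      apply le_of_forall_pos_le_add
      intro ε hε
      obtain ⟨x, hxX, hx𝒳, hft, hfb, hxval⟩ := hnearinf y hy ε hε
      obtain ⟨x', hxX', hx𝒳', hft', hfb', hxval'⟩ := hnearinf y' hy' ε hε
      have hx''𝒳 : a • x + b' • x' ∈ 𝒳 (t + 1) := h𝒳sconv hx𝒳 hx𝒳' ha hb hab
      rw [hX] at hxX hxX'
      simp only [Set.mem_setOf_eq] at hxX hxX'
      obtain ⟨-, hgx, hAx⟩ := hxX
      obtain ⟨-, hgx', hAx'⟩ := hxX'
      have hgx'' : ∀ i, g (t + 1) i (a • x + b' • x') (a • y + b' • y') ≤ 0 := by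
        intro i
        have hcvx := (hgprop i).2.2.1
        have h1 : (((x, y), (0 : ℝ)) :
            (EuclideanSpace ℝ (Fin n) × EuclideanSpace ℝ (Fin n)) × ℝ) ∈
            {pz : (EuclideanSpace ℝ (Fin n) × EuclideanSpace ℝ (Fin n)) × ℝ |
              g (t + 1) i pz.1.1 pz.1.2 ≤ ((pz.2 : ℝ) : EReal)} := by
          simpa using hgx i
        have h2 : (((x', y'), (0 : ℝ)) :
            (EuclideanSpace ℝ (Fin n) × EuclideanSpace ℝ (Fin n)) × ℝ) ∈
            {pz : (EuclideanSpace ℝ (Fin n) × EuclideanSpace ℝ (Fin n)) × ℝ |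
              g (t + 1) i pz.1.1 pz.1.2 ≤ ((pz.2 : ℝ) : EReal)} := by
          simpa using hgx' i
        have hmem := hcvx h1 h2 ha hb hab
        simpa [Prod.smul_mk, Prod.mk_add_mk] using hmem
      have hA'' : (A (t + 1)).mulVec (a • x + b' • x') +
          (B (t + 1)).mulVec (a • y + b' • y') = b (t + 1) := by
        rw [mulVec_comb_aux, mulVec_comb_aux]
        have : a • (A (t + 1)).mulVec x + b' • (A (t + 1)).mulVec x' +
            (a • (B (t + 1)).mulVec y + b' • (B (t + 1)).mulVec y') =
            a • ((A (t + 1)).mulVec x + (B (t + 1)).mulVec y) +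
            b' • ((A (t + 1)).mulVec x' + (B (t + 1)).mulVec y') := by
          module
        rw [this, hAx, hAx', ← add_smul, hab, one_smul]
      have hx''X : (a • x + b' • x') ∈ X (t + 1) (a • y + b' • y') := by
        rw [hX]
        simp only [Set.mem_setOf_eq]
        exact ⟨hx''𝒳, hgx'', hA''⟩
      have hf'' : f (t + 1) (a • x + b' • x') (a • y + b' • y') ≤
          ((a * (f (t + 1) x y).toReal + b' * (f (t + 1) x' y').toReal : ℝ) : EReal) := by
        have h1 : (((x, y), (f (t + 1) x y).toReal) :
            (EuclideanSpace ℝ (Fin n) × EuclideanSpace ℝ (Fin n)) × ℝ) ∈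
            {pz : (EuclideanSpace ℝ (Fin n) × EuclideanSpace ℝ (Fin n)) × ℝ |
              f (t + 1) pz.1.1 pz.1.2 ≤ ((pz.2 : ℝ) : EReal)} := by
          simp only [Set.mem_setOf_eq]
          rw [EReal.coe_toReal hft hfb]
        have h2 : (((x', y'), (f (t + 1) x' y').toReal) :
            (EuclideanSpace ℝ (Fin n) × EuclideanSpace ℝ (Fin n)) × ℝ) ∈
            {pz : (EuclideanSpace ℝ (Fin n) × EuclideanSpace ℝ (Fin n)) × ℝ |
              f (t + 1) pz.1.1 pz.1.2 ≤ ((pz.2 : ℝ) : EReal)} := by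
          simp only [Set.mem_setOf_eq]
          rw [EReal.coe_toReal hft' hfb']
        have hmem := hfcvx h1 h2 ha hb hab
        simpa [Prod.smul_mk, Prod.mk_add_mk, smul_eq_mul] using hmem
      have hqr'' : qr (a • x + b' • x') ≤ a * qr x + b' * qr x' := by
        have := hconv.2 hx𝒳 hx𝒳' ha hb hab
        simpa [smul_eq_mul] using this
      have hQ'' : Q (t + 1) (a • y + b' • y') ≤ ((a * R y + b' * R y' + ε : ℝ) : EReal) := by
        rw [hQ (t + 1) (by omega) hsT]
        refine le_trans (sInf_le ⟨_, hx''X, rfl⟩) ?_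
        show f (t + 1) (a • x + b' • x') (a • y + b' • y') +
          Q (t + 1 + 1) (a • x + b' • x') ≤ ((a * R y + b' * R y' + ε : ℝ) : EReal)
        rw [← hQcoe _ hx''𝒳]
        calc f (t + 1) (a • x + b' • x') (a • y + b' • y') + ((qr (a • x + b' • x') : ℝ) : EReal)
            ≤ ((a * (f (t + 1) x y).toReal + b' * (f (t + 1) x' y').toReal : ℝ) : EReal) +
              ((a * qr x + b' * qr x' : ℝ) : EReal) :=
              add_le_add hf'' (by exact_mod_cast hqr'')
          _ = (((a * (f (t + 1) x y).toReal + b' * (f (t + 1) x' y').toReal) +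
              (a * qr x + b' * qr x') : ℝ) : EReal) := by rw [← EReal.coe_add]
          _ ≤ ((a * R y + b' * R y' + ε : ℝ) : EReal) := by
              have e1 := mul_le_mul_of_nonneg_left hxval.le ha
              have e2 := mul_le_mul_of_nonneg_left hxval'.le hb
              have : (a * (f (t + 1) x y).toReal + b' * (f (t + 1) x' y').toReal) +
                  (a * qr x + b' * qr x') ≤ a * R y + b' * R y' + ε := by nlinarith
              exact_mod_cast this
      have hne : Q (t + 1) (a • y + b' • y') ≠ ⊥ := (hfinU _ hy'').1
      have hfinal := EReal.toReal_le_toReal hQ'' hne (EReal.coe_ne_top _)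
      rw [EReal.toReal_coe] at hfinal
      exact hfinal
    -- continuity and boundedness, then the Lipschitz estimate
    have hRcont : ContinuousOn R U := hRconv.continuousOn hUopen
    have hK'cpt : IsCompact (Metric.cthickening (δ / 2) (𝒳 t)) := h𝒳tcpt.cthickening
    have hK'U : Metric.cthickening (δ / 2) (𝒳 t) ⊆ U :=
      Metric.cthickening_subset_thickening' hδpos (by linarith) _
    obtain ⟨M₀, hM₀⟩ := hK'cpt.exists_bound_of_continuousOn (hRcont.mono hK'U)
    have hU'K' : Metric.thickening (δ / 2) (𝒳 t) ⊆ Metric.cthickening (δ / 2) (𝒳 t) :=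
      Metric.thickening_subset_cthickening _ _
    have hMbd : ∀ y ∈ Metric.thickening (δ / 2) (𝒳 t), |R y| ≤ max M₀ 0 := fun y hy =>
      le_trans (by simpa [Real.norm_eq_abs] using hM₀ y (hU'K' hy)) (le_max_left _ _)
    have hL := convex_lipschitz_aux
      (hRconv.subset (hU'K'.trans hK'U) (h𝒳tconv.thickening _)) hMbd
      (by positivity : (0 : ℝ) < δ / 2)
      (fun y hy w hw => Metric.mem_thickening_iff.mpr ⟨y, hy, Metric.mem_ball.mp hw⟩)
    refine ⟨fun y hy => hfinU y (h𝒳tU hy), hRconv.subset h𝒳tU h𝒳tconv,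
      4 * max M₀ 0 / (δ / 2), ?_, ?_⟩
    · have h1 : (0 : ℝ) ≤ max M₀ 0 := le_max_right _ _
      have h2 : (0 : ℝ) < δ / 2 := by positivity
      positivity
    · intro y hy y' hy'
      exact hL y hy y' hy'
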